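/- Let n ∈ ℕ be even, let r be uniform on E_n = {v ∈ {-1,1}^n : #₁(v) even}, and let x, y ∈ {-1,1}^n with #₁(x) ≡ #₁(y) (mod 2). Write α = (n - |Diff(x,y)|)/n. Then for integers t_x, t_y with 2t_x in the support of ⟨r,x⟩ and 2t_y in the support of ⟨r,y⟩, Pr[⟨r,x⟩ = 2t_x and ⟨r,y⟩ = 2t_y] = (1/2^{n-1}) · C(αn, (αn + t_x + t_y)/2) · C((1-α)n, ((1-α)n + t_x - t_y)/2). -/

import Mathlib

set_option linter.all false

open Finset

/-- The ±1 value associated with a boolean. -/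
def sgn (b : Bool) : ℤ := if b then 1 else -1

/-- The set of "even" sign vectors: those with an even number of +1 entries. -/
def evenVecs (n : ℕ) : Finset (Fin n → Bool) :=
  univ.filter fun r => Even ((univ.filter fun i => r i = true).card)

/-- Binomial coefficient with an integer lower argument, interpreted as 0
when the argument is negative. -/
def chooseZ (n : ℕ) (k : ℤ) : ℕ := if 0 ≤ k then n.choose k.toNat else 0

lemma card_filter_or_split {α : Type*} [Fintype α] (p q₁ q₂ : α → Prop)
    [DecidablePred p] [DecidablePred q₁] [DecidablePred q₂]
    (h : ∀ a, p a ↔ (q₁ a ∨ q₂ a)) (hd : ∀ a, ¬(q₁ a ∧ q₂ a)) :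
    (univ.filter p).card = (univ.filter q₁).card + (univ.filter q₂).card := by
  classical
  rw [filter_congr (fun a _ => by simp [h a] : ∀ a ∈ univ, p a ↔ (q₁ a ∨ q₂ a))]
  rw [filter_or, card_union_of_disjoint]
  rw [disjoint_filter]
  intro a _ h1 h2
  exact hd a ⟨h1, h2⟩

lemma parity_m {n : ℕ} (x : Fin n → ℤ) (hx : ∀ i, x i = 1 ∨ x i = -1) (r : Fin n → Bool) :
    ((univ.filter fun i => sgn (r i) = x i).card) % 2
      = (((univ.filter fun i => r i = true).card) + ((univ.filter fun i => x i = -1).card)) % 2 := by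
  have hm : (univ.filter fun i => sgn (r i) = x i).card
      = (univ.filter fun i => r i = true ∧ x i = 1).card
        + (univ.filter fun i => r i = false ∧ x i = -1).card := by
    apply card_filter_or_split
    · intro i; rcases hx i with h | h <;> cases hr : r i <;> simp [sgn, h, hr]
    · intro i ⟨⟨h1, h2⟩, ⟨h3, h4⟩⟩; rw [h1] at h3; simp at h3
  have ht : (univ.filter fun i => r i = true).card
      = (univ.filter fun i => r i = true ∧ x i = 1).card
        + (univ.filter fun i => r i = true ∧ x i = -1).card := by
    apply card_filter_or_split
    · intro i; rcases hx i with h | h <;> simp [h]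
    · intro i ⟨⟨_, h2⟩, ⟨_, h4⟩⟩; rw [h2] at h4; simp at h4
  have hq : (univ.filter fun i => x i = -1).card
      = (univ.filter fun i => r i = true ∧ x i = -1).card
        + (univ.filter fun i => r i = false ∧ x i = -1).card := by
    apply card_filter_or_split
    · intro i; cases hr : r i <;> simp [hr, and_comm]
    · intro i ⟨⟨h1, _⟩, ⟨h3, _⟩⟩; rw [h1] at h3; simp at h3
  omega

lemma sum_sgn_mul {n : ℕ} (x : Fin n → ℤ) (hx : ∀ i, x i = 1 ∨ x i = -1) (r : Fin n → Bool) :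
    ∑ i, sgn (r i) * x i = 2 * ((univ.filter fun i => sgn (r i) = x i).card : ℤ) - n := by
  have h : ∀ i ∈ univ, sgn (r i) * x i = 2 * (if sgn (r i) = x i then (1:ℤ) else 0) - 1 := by
    intro i _; rcases hx i with h | h <;> cases hr : r i <;> simp [sgn, h, hr]
  rw [Finset.sum_congr rfl h, Finset.sum_sub_distrib, ← Finset.mul_sum, Finset.sum_boole]
  simp [Finset.card_univ]

lemma sum_sgn_over {n : ℕ} (S : Finset (Fin n)) (u : Fin n → Bool) :
    ∑ i ∈ S, sgn (u i) = 2 * ((S.filter fun i => u i = true).card : ℤ) - S.card := by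
  have h : ∀ i ∈ S, sgn (u i) = 2 * (if u i = true then (1:ℤ) else 0) - 1 := by
    intro i _; cases h : u i <;> simp [sgn]
  rw [Finset.sum_congr rfl h, Finset.sum_sub_distrib, ← Finset.mul_sum, Finset.sum_boole]
  simp

lemma card_succ_filter {n : ℕ} (r : Fin (n + 1) → Bool) :
    (univ.filter fun i => r i = true).card
      = (if r 0 = true then 1 else 0) + (univ.filter fun i : Fin n => r i.succ = true).card := by
  rw [card_filter, card_filter, Fin.sum_univ_succ]

lemma card_evenVecs (n : ℕ) : (evenVecs n).card = 2 ^ (n - 1) := by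
  cases n with
  | zero => decide
  | succ m =>
    have : (evenVecs (m + 1)).card = (univ : Finset (Fin m → Bool)).card := by
      apply Finset.card_nbij' (i := fun r => r ∘ Fin.succ)
        (j := fun f => Fin.cons (decide (¬ Even ((univ.filter fun i => f i = true)).card)) f)
      · intro r _; exact mem_univ _
      · intro f _
        simp only [evenVecs, mem_coe, mem_filter, mem_univ, true_and]
        rw [card_succ_filter]
        simp only [Fin.cons_zero, Fin.cons_succ]
        by_cases h : Even ((univ.filter fun i => f i = true)).card
        · simp [h]
        · simp [h, Nat.even_add_one, Nat.even_add]
      · intro r hr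
        simp only [evenVecs, mem_coe, mem_filter, mem_univ, true_and] at hr
        rw [card_succ_filter] at hr
        funext i
        refine Fin.cases ?_ ?_ i
        · simp only [Fin.cons_zero]
          cases h0 : r 0
          · simp [h0] at hr ⊢
            exact hr
          · simp [h0] at hr ⊢
            rw [add_comm, Nat.even_add_one] at hr
            exact Nat.not_even_iff_odd.mp hr
        · intro j; simp [Fin.cons_succ]
      · intro f _
        funext i
        simp [Fin.cons_succ]
    rw [this]
    simp [Finset.card_univ]

def phiB {n : ℕ} (x : Fin n → ℤ) (r : Fin n → Bool) : Fin n → Bool :=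
  fun i => decide (sgn (r i) = x i)

lemma sgn_phiB {n : ℕ} (x : Fin n → ℤ) (hx : ∀ i, x i = 1 ∨ x i = -1) (r : Fin n → Bool)
    (i : Fin n) : sgn (phiB x r i) = sgn (r i) * x i := by
  rcases hx i with h | h <;> cases hr : r i <;> simp [phiB, sgn, h, hr]

lemma phiB_invol {n : ℕ} (x : Fin n → ℤ) (hx : ∀ i, x i = 1 ∨ x i = -1) (r : Fin n → Bool) :
    phiB x (phiB x r) = r := by
  funext i
  rcases hx i with h | h <;> cases hr : r i <;> simp [phiB, sgn, h, hr]

lemma chooseZ_neg (m : ℕ) {k : ℤ} (hk : k < 0) : chooseZ m k = 0 := by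
  simp [chooseZ, not_le.mpr hk]

lemma count_pair {n : ℕ} (A B : Finset (Fin n)) (hU : ∀ i, i ∈ A ∨ i ∈ B) (hd : Disjoint A B)
    (k₁ k₂ : ℕ) :
    (univ.filter fun u : Fin n → Bool =>
        (A.filter fun i => u i = true).card = k₁ ∧ (B.filter fun i => u i = true).card = k₂).card
      = A.card.choose k₁ * B.card.choose k₂ := by
  classical
  rw [← Finset.card_powersetCard, ← Finset.card_powersetCard, ← Finset.card_product]
  apply Finset.card_nbij'
    (i := fun u => (A.filter fun i => u i = true, B.filter fun i => u i = true))
    (j := fun p => fun i => decide (i ∈ p.1 ∪ p.2))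
  · intro u hu
    simp only [mem_coe, mem_filter, mem_univ, true_and] at hu
    simp only [mem_coe, mem_product, mem_powersetCard]
    exact ⟨⟨filter_subset _ _, hu.1⟩, ⟨filter_subset _ _, hu.2⟩⟩
  · intro p hp
    simp only [mem_coe, mem_product, mem_powersetCard] at hp
    obtain ⟨⟨h1s, h1c⟩, ⟨h2s, h2c⟩⟩ := hp
    simp only [mem_coe, mem_filter, mem_univ, true_and]
    constructor
    · rw [← h1c]; congr 1
      ext i
      simp only [mem_filter, decide_eq_true_eq, mem_union]
      constructor
      · rintro ⟨hiA, hi1 | hi2⟩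
        · exact hi1
        · exact absurd hiA (fun h => (disjoint_left.mp hd h (h2s hi2)))
      · intro h; exact ⟨h1s h, Or.inl h⟩
    · rw [← h2c]; congr 1
      ext i
      simp only [mem_filter, decide_eq_true_eq, mem_union]
      constructor
      · rintro ⟨hiB, hi1 | hi2⟩
        · exact absurd hiB (fun h => (disjoint_right.mp hd h (h1s hi1)))
        · exact hi2
      · intro h; exact ⟨h2s h, Or.inr h⟩
  · intro u _
    funext i
    rcases hU i with h | h
    · cases hui : u i <;> simp [mem_filter, h, hui, disjoint_left.mp hd h]
    · cases hui : u i <;> simp [mem_filter, h, hui, disjoint_right.mp hd h]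
  · intro p hp
    simp only [mem_coe, mem_product, mem_powersetCard] at hp
    obtain ⟨⟨h1s, _⟩, ⟨h2s, _⟩⟩ := hp
    ext1
    · ext i
      simp only [mem_filter, decide_eq_true_eq, mem_union]
      constructor
      · rintro ⟨hiA, hi1 | hi2⟩
        · exact hi1
        · exact absurd hiA (fun h => (disjoint_left.mp hd h (h2s hi2)))
      · intro h; exact ⟨h1s h, Or.inl h⟩
    · ext i
      simp only [mem_filter, decide_eq_true_eq, mem_union]
      constructor
      · rintro ⟨hiB, hi1 | hi2⟩
        · exact absurd hiB (fun h => (disjoint_right.mp hd h (h1s hi1)))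
        · exact hi2
      · intro h; exact ⟨h2s h, Or.inr h⟩

lemma count_pair' {n : ℕ} (A B : Finset (Fin n)) (hU : ∀ i, i ∈ A ∨ i ∈ B) (hd : Disjoint A B)
    (sA sB : ℤ) (h2A : (2:ℤ) ∣ sA) (h2B : (2:ℤ) ∣ sB) :
    (univ.filter fun u : Fin n → Bool =>
        2 * ((A.filter fun i => u i = true).card : ℤ) = sA
          ∧ 2 * ((B.filter fun i => u i = true).card : ℤ) = sB).card
      = chooseZ A.card (sA / 2) * chooseZ B.card (sB / 2) := by
  by_cases hA : 0 ≤ sA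
  · by_cases hB : 0 ≤ sB
    · obtain ⟨k₁, rfl⟩ := h2A
      obtain ⟨k₂, rfl⟩ := h2B
      have hk₁ : 0 ≤ k₁ := by omega
      have hk₂ : 0 ≤ k₂ := by omega
      have e1 : (2 * k₁) / 2 = k₁ := by omega
      have e2 : (2 * k₂) / 2 = k₂ := by omega
      rw [e1, e2]
      rw [show chooseZ A.card k₁ = A.card.choose k₁.toNat by simp [chooseZ, hk₁]]
      rw [show chooseZ B.card k₂ = B.card.choose k₂.toNat by simp [chooseZ, hk₂]]
      rw [← count_pair A B hU hd k₁.toNat k₂.toNat]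
      congr 1
      apply filter_congr
      intro u _
      constructor
      · rintro ⟨h1, h2⟩; constructor <;> omega
      · rintro ⟨h1, h2⟩; constructor <;> omega
    · rw [filter_eq_empty_iff.mpr, card_empty, chooseZ_neg B.card (by omega), mul_zero]
      intro u _
      rintro ⟨-, h2⟩
      omega
  · rw [filter_eq_empty_iff.mpr, card_empty, chooseZ_neg A.card (by omega), zero_mul]
    intro u _
    rintro ⟨h1, -⟩
    omega

lemma aux_sub (a b n : ℕ) (h : a + b = n) : n - b = a := by omega

set_option maxHeartbeats 1000000 in
/-- joint core probabilities. With α n = n - |Diff(x,y)|,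
Pr[⟨r,x⟩ = 2t_x, ⟨r,y⟩ = 2t_y] =
(1/2^(n-1)) C(αn, (αn + t_x + t_y)/2) C((1-α)n, ((1-α)n + t_x - t_y)/2). -/
theorem joint_prob_inner {n : ℕ} (hn : Even n) (x y : Fin n → ℤ)
    (hx : ∀ i, x i = 1 ∨ x i = -1) (hy : ∀ i, y i = 1 ∨ y i = -1)
    (hpar : {i : Fin n | x i = 1}.ncard % 2 = {i : Fin n | y i = 1}.ncard % 2)
    (tx ty : ℤ)
    (hsx : ∃ r ∈ evenVecs n, ∑ i, sgn (r i) * x i = 2 * tx)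
    (hsy : ∃ r ∈ evenVecs n, ∑ i, sgn (r i) * y i = 2 * ty) :
    (((evenVecs n).filter fun r =>
          ∑ i, sgn (r i) * x i = 2 * tx ∧ ∑ i, sgn (r i) * y i = 2 * ty).card : ℝ) /
        ((evenVecs n).card : ℝ) =
      (1 / 2 ^ (n - 1)) *
        (chooseZ (n - {i : Fin n | x i ≠ y i}.ncard)
            ((((n : ℤ) - {i : Fin n | x i ≠ y i}.ncard) + tx + ty) / 2) : ℝ) *
        (chooseZ ({i : Fin n | x i ≠ y i}.ncard)
            ((({i : Fin n | x i ≠ y i}.ncard : ℤ) + tx - ty) / 2) : ℝ) := by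
  classical
  set A : Finset (Fin n) := univ.filter (fun i => x i = y i) with hA_def
  set B : Finset (Fin n) := univ.filter (fun i => ¬ x i = y i) with hB_def
  -- basic facts about A and B
  have hAB_disj : Disjoint A B := by
    rw [hA_def, hB_def, disjoint_filter]
    intro a _ h1 h2
    exact h2 h1
  have hAB_univ : ∀ i, i ∈ A ∨ i ∈ B := by
    intro i
    by_cases h : x i = y i
    · exact Or.inl (by simp [hA_def, h])
    · exact Or.inr (by simp [hB_def, h])
  have hABn : A.card + B.card = n := by
    rw [hA_def, hB_def, Finset.card_filter_add_card_filter_not, card_univ,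
      Fintype.card_fin]
  have hncard : {i : Fin n | x i ≠ y i}.ncard = B.card := by
    rw [Set.ncard_eq_toFinset_card', hB_def]
    congr 1
    ext i
    simp
  -- parity bookkeeping
  obtain ⟨r₀, hr₀e, hr₀x⟩ := hsx
  obtain ⟨r₁, hr₁e, hr₁y⟩ := hsy
  have hr₀e' : ((univ.filter fun i => r₀ i = true).card) % 2 = 0 := by
    simp only [evenVecs, mem_filter, mem_univ, true_and] at hr₀e
    exact Nat.even_iff.mp hr₀e
  have hr₁e' : ((univ.filter fun i => r₁ i = true).card) % 2 = 0 := by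
    simp only [evenVecs, mem_filter, mem_univ, true_and] at hr₁e
    exact Nat.even_iff.mp hr₁e
  have hsum₀ := sum_sgn_mul x hx r₀
  have hsum₁ := sum_sgn_mul y hy r₁
  have hpar₀ := parity_m x hx r₀
  have hpar₁ := parity_m y hy r₁
  -- convert ncards in hpar
  have hpx : {i : Fin n | x i = 1}.ncard = (univ.filter fun i => x i = 1).card := by
    rw [Set.ncard_eq_toFinset_card']
    congr 1
    ext i
    simp
  have hpy : {i : Fin n | y i = 1}.ncard = (univ.filter fun i => y i = 1).card := by
    rw [Set.ncard_eq_toFinset_card']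
    congr 1
    ext i
    simp
  rw [hpx, hpy] at hpar
  -- complements
  have hqx : (univ.filter fun i => x i = 1).card + (univ.filter fun i => x i = -1).card = n := by
    have := Finset.card_filter_add_card_filter_not (s := (univ : Finset (Fin n)))
      (p := fun i => x i = 1)
    rw [card_univ, Fintype.card_fin] at this
    rw [show (univ.filter fun i => x i = -1) = (univ.filter fun i => ¬ x i = 1) from
      filter_congr (fun i _ => by rcases hx i with h | h <;> simp [h])]
    exact this
  have hqy : (univ.filter fun i => y i = 1).card + (univ.filter fun i => y i = -1).card = n := by
    have := Finset.card_filter_add_card_filter_not (s := (univ : Finset (Fin n)))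
      (p := fun i => y i = 1)
    rw [card_univ, Fintype.card_fin] at this
    rw [show (univ.filter fun i => y i = -1) = (univ.filter fun i => ¬ y i = 1) from
      filter_congr (fun i _ => by rcases hy i with h | h <;> simp [h])]
    exact this
  -- parity of B.card
  have hsplit_x : (univ.filter fun i => x i = 1).card
      = (univ.filter fun i => x i = 1 ∧ y i = 1).card
        + (univ.filter fun i => x i = 1 ∧ y i = -1).card := by
    apply card_filter_or_split
    · intro i; rcases hy i with h | h <;> simp [h]
    · intro i ⟨⟨_, h2⟩, ⟨_, h4⟩⟩; rw [h2] at h4; simp at h4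
  have hsplit_y : (univ.filter fun i => y i = 1).card
      = (univ.filter fun i => x i = 1 ∧ y i = 1).card
        + (univ.filter fun i => x i = -1 ∧ y i = 1).card := by
    apply card_filter_or_split
    · intro i; rcases hx i with h | h <;> simp [h]
    · intro i ⟨⟨h1, _⟩, ⟨h3, _⟩⟩; rw [h1] at h3; simp at h3
  have hsplit_B : B.card
      = (univ.filter fun i => x i = 1 ∧ y i = -1).card
        + (univ.filter fun i => x i = -1 ∧ y i = 1).card := by
    rw [hB_def]
    apply card_filter_or_split
    · intro i
      rcases hx i with h1 | h1 <;> rcases hy i with h2 | h2 <;> simp [h1, h2] <;> omega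
    · intro i ⟨⟨h1, _⟩, ⟨h3, _⟩⟩; rw [h1] at h3; simp at h3
  have hn' : n % 2 = 0 := Nat.even_iff.mp hn
  -- divisibility facts
  have hdivA : (2:ℤ) ∣ ((A.card : ℤ) + tx + ty) := by
    rw [hr₀x] at hsum₀
    rw [hr₁y] at hsum₁
    omega
  have hdivB : (2:ℤ) ∣ ((B.card : ℤ) + tx - ty) := by
    rw [hr₀x] at hsum₀
    rw [hr₁y] at hsum₁
    omega
  -- the x-condition forces membership in evenVecs
  have hforce : ∀ r : Fin n → Bool, ∑ i, sgn (r i) * x i = 2 * tx →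
      Even ((univ.filter fun i => r i = true).card) := by
    intro r hr
    have h1 := sum_sgn_mul x hx r
    have h2 := parity_m x hx r
    rw [hr] at h1
    rw [hr₀x] at hsum₀
    rw [Nat.even_iff]
    omega
  -- Step A: drop the evenness constraint
  have stepA : ((evenVecs n).filter fun r =>
        ∑ i, sgn (r i) * x i = 2 * tx ∧ ∑ i, sgn (r i) * y i = 2 * ty)
      = (univ.filter fun r : Fin n → Bool =>
        ∑ i, sgn (r i) * x i = 2 * tx ∧ ∑ i, sgn (r i) * y i = 2 * ty) := by
    rw [evenVecs, filter_filter]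
    apply filter_congr
    intro r _
    constructor
    · rintro ⟨-, h⟩; exact h
    · intro h; exact ⟨hforce r h.1, h⟩
  -- the key pointwise equivalence via the involution phiB
  have hPQ : ∀ r : Fin n → Bool,
      (∑ i, sgn (r i) * x i = 2 * tx ∧ ∑ i, sgn (r i) * y i = 2 * ty) ↔
      (2 * ((A.filter fun i => phiB x r i = true).card : ℤ) = (A.card : ℤ) + tx + ty
        ∧ 2 * ((B.filter fun i => phiB x r i = true).card : ℤ) = (B.card : ℤ) + tx - ty) := by
    intro r
    have e0 : ∑ i, sgn (r i) * x i
        = ∑ i ∈ A, sgn (phiB x r i) + ∑ i ∈ B, sgn (phiB x r i) := by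
      rw [hA_def, hB_def, Finset.sum_filter_add_sum_filter_not univ (fun i => x i = y i)]
      exact Finset.sum_congr rfl (fun i _ => (sgn_phiB x hx r i).symm)
    have eA : ∑ i ∈ A, sgn (r i) * y i = ∑ i ∈ A, sgn (phiB x r i) := by
      apply Finset.sum_congr rfl
      intro i hi
      have hxy : x i = y i := (mem_filter.mp hi).2
      rw [sgn_phiB x hx, hxy]
    have eB : ∑ i ∈ B, sgn (r i) * y i = -∑ i ∈ B, sgn (phiB x r i) := by
      rw [← Finset.sum_neg_distrib]
      apply Finset.sum_congr rfl
      intro i hi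
      have hxy : ¬ x i = y i := (mem_filter.mp hi).2
      have hyx : y i = -x i := by
        rcases hx i with h | h <;> rcases hy i with h' | h' <;> simp [h, h'] at hxy ⊢
      rw [sgn_phiB x hx, hyx]
      ring
    have e1 : ∑ i, sgn (r i) * y i
        = ∑ i ∈ A, sgn (phiB x r i) - ∑ i ∈ B, sgn (phiB x r i) := by
      rw [show ∑ i, sgn (r i) * y i
          = ∑ i ∈ A, sgn (r i) * y i + ∑ i ∈ B, sgn (r i) * y i by
        rw [hA_def, hB_def, Finset.sum_filter_add_sum_filter_not univ (fun i => x i = y i)]]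
      rw [eA, eB]
      ring
    have sA := sum_sgn_over A (phiB x r)
    have sB := sum_sgn_over B (phiB x r)
    rw [e0, e1]
    constructor
    · rintro ⟨h1, h2⟩; constructor <;> omega
    · rintro ⟨h1, h2⟩; constructor <;> omega
  -- Step B: transport the count along phiB
  have stepB : (univ.filter fun r : Fin n → Bool =>
        ∑ i, sgn (r i) * x i = 2 * tx ∧ ∑ i, sgn (r i) * y i = 2 * ty).card
      = (univ.filter fun u : Fin n → Bool =>
        2 * ((A.filter fun i => u i = true).card : ℤ) = (A.card : ℤ) + tx + ty
          ∧ 2 * ((B.filter fun i => u i = true).card : ℤ) = (B.card : ℤ) + tx - ty).card := by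
    apply Finset.card_nbij' (i := phiB x) (j := phiB x)
    · intro r hr
      simp only [mem_coe, mem_filter, mem_univ, true_and] at hr ⊢
      exact (hPQ r).mp hr
    · intro u hu
      simp only [mem_coe, mem_filter, mem_univ, true_and] at hu ⊢
      have := (hPQ (phiB x u)).mpr
      rw [phiB_invol x hx] at this
      exact this hu
    · intro r _; exact phiB_invol x hx r
    · intro u _; exact phiB_invol x hx u
  -- Step D: count
  have stepD := count_pair' A B hAB_univ hAB_disj ((A.card : ℤ) + tx + ty)
    ((B.card : ℤ) + tx - ty) hdivA hdivB
  -- final rewriting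
  have g1 : n - {i : Fin n | x i ≠ y i}.ncard = A.card := by
    rw [hncard]
    exact aux_sub _ _ _ hABn
  have g2 : ((n : ℤ) - {i : Fin n | x i ≠ y i}.ncard + tx + ty) = ((A.card : ℤ) + tx + ty) := by
    rw [hncard]
    have : (n : ℤ) = (A.card : ℤ) + (B.card : ℤ) := by exact_mod_cast congrArg (Nat.cast : ℕ → ℤ) hABn.symm
    rw [this]
    ring
  have g3 : (({i : Fin n | x i ≠ y i}.ncard : ℤ) + tx - ty) = ((B.card : ℤ) + tx - ty) := by
    rw [hncard]
  rw [stepA, stepB, stepD, card_evenVecs, g1, g2, g3, hncard]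
  push_cast
  ring
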